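/- Let G be a finite abelian group, Ω a finite set, and T, S : G → ℂ^{Ω×Ω} families of matrices with: each T_g a permutation matrix and T_g·T_h = T_{gh}; each S_g a 0-1 matrix; Σ_{g∈G} T_g + Σ_{g∈G} S_g = J (the all-ones matrix); and T_h·S_g = S_{hg}, S_g·T_h = S_{gh} for all g, h ∈ G. Fix z ∈ Ω and set Ω̃₁ := {z} ∪ {y ∈ Ω : (S_1)_{z,y} = 1}. Then the map Ω̃₁ × G → Ω, (x, g) ↦ x^g, is a bijection. -/
import Mathlib

open scoped BigOperators
open Matrix

noncomputable section

private lemma sum_zero_one_eq_one {ι : Type*} [Fintype ι] [DecidableEq ι] (f : ι → ℂ)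
    (h01 : ∀ i, f i = 0 ∨ f i = 1) (hsum : ∑ i, f i = 1) :
    ∃! i, f i = 1 := by
  classical
  have key : ∑ i, f i = ((Finset.univ.filter (fun i => f i = 1)).card : ℂ) := by
    rw [Finset.card_filter]
    push_cast
    apply Finset.sum_congr rfl
    intro i _
    rcases h01 i with h | h <;> simp [h]
  rw [key] at hsum
  have hc : (Finset.univ.filter (fun i => f i = 1)).card = 1 := by exact_mod_cast hsum
  obtain ⟨a, ha⟩ := Finset.card_eq_one.mp hc
  refine ⟨a, ?_, ?_⟩
  · have : a ∈ Finset.univ.filter (fun i => f i = 1) := ha ▸ Finset.mem_singleton_self a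
    simpa using this
  · intro b hb
    have : b ∈ Finset.univ.filter (fun i => f i = 1) := by simpa using hb
    rw [ha] at this; simpa using this

theorem stmt10 {G : Type*} [CommGroup G] [Fintype G] [DecidableEq G]
    {Ω : Type*} [Fintype Ω] [DecidableEq Ω]
    (T S : G → Matrix Ω Ω ℂ)
    (σ : G → Equiv.Perm Ω)
    (hσ : ∀ (g : G) (x y : Ω), T g x y = if σ g x = y then 1 else 0)
    (hT : ∀ g h : G, T g * T h = T (g * h))
    (hS01 : ∀ (g : G) (x y : Ω), S g x y = 0 ∨ S g x y = 1)
    (hJ : ∀ x y : Ω, (∑ g : G, T g x y) + ∑ g : G, S g x y = 1)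
    (hTS : ∀ g h : G, T h * S g = S (h * g))
    (hST : ∀ g h : G, S g * T h = S (g * h))
    (z : Ω) :
    Function.Bijective
      (fun p : (insert z {y : Ω | S 1 z y = 1} : Set Ω) × G => σ p.2 p.1) := by
  classical
  -- multiplicativity of σ
  have hσmul : ∀ g h : G, ∀ x : Ω, σ (g * h) x = σ h (σ g x) := by
    intro g h x
    have e := congrFun (congrFun (hT g h) x) (σ h (σ g x))
    rw [Matrix.mul_apply] at e
    simp only [hσ] at e
    rw [Finset.sum_congr rfl (fun k _ => by
      rw [show (if σ g x = k then (1:ℂ) else 0) * (if σ h k = σ h (σ g x) then 1 else 0)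
          = if k = σ g x then (if σ h k = σ h (σ g x) then (1:ℂ) else 0) else 0 by
        rcases eq_or_ne (σ g x) k with hk | hk
        · subst hk; simp
        · rw [if_neg hk, zero_mul, if_neg (fun hc => hk hc.symm)]])] at e
    rw [Finset.sum_ite_eq' Finset.univ (σ g x)
      (fun k => if σ h k = σ h (σ g x) then (1:ℂ) else 0)] at e
    rw [if_pos (Finset.mem_univ _), if_pos rfl] at e
    by_contra hne
    rw [if_neg hne] at e
    exact one_ne_zero e
  have hσone : ∀ x : Ω, σ 1 x = x := by
    intro x
    have h1 := hσmul 1 1 x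
    rw [one_mul] at h1
    exact (σ 1).injective h1.symm
  have hσinv : ∀ g : G, ∀ x : Ω, σ g⁻¹ (σ g x) = x := by
    intro g x
    have := hσmul g g⁻¹ x
    simpa [hσone] using this.symm
  have hσinv' : ∀ g : G, ∀ w : Ω, σ g (σ g⁻¹ w) = w := by
    intro g w
    have := hσmul g⁻¹ g w
    simpa [hσone] using this.symm
  -- S g x w = S 1 x (σ g⁻¹ w)
  have hSshift : ∀ (g : G) (x w : Ω), S g x w = S 1 x (σ g⁻¹ w) := by
    intro g x w
    have e := congrFun (congrFun (hST 1 g) x) w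
    rw [Matrix.mul_apply] at e
    simp only [hσ, one_mul] at e
    rw [Finset.sum_congr rfl (fun y _ => by
      rw [show S 1 x y * (if σ g y = w then (1:ℂ) else 0)
          = if y = σ g⁻¹ w then S 1 x y else 0 by
        by_cases hy : y = σ g⁻¹ w
        · subst hy; simp [hσinv']
        · have : σ g y ≠ w := fun hc => hy (by rw [← hc, hσinv])
          simp [this, hy]])] at e
    rw [Finset.sum_ite_eq' Finset.univ (σ g⁻¹ w) (fun y => S 1 x y)] at e
    simpa using e.symm
  -- the key existence/uniqueness statement
  have hkey : ∀ w : Ω, ∃! i : G ⊕ G,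
      Sum.elim (fun g => T g z w) (fun g => S g z w) i = 1 := by
    intro w
    apply sum_zero_one_eq_one
    · intro i
      cases i with
      | inl g => rw [Sum.elim_inl, hσ]; by_cases h : σ g z = w <;> simp [h]
      | inr g => exact hS01 g z w
    · rw [Fintype.sum_sum_type]
      simpa using hJ z w
  constructor
  · -- injective
    rintro ⟨⟨x, hx⟩, g⟩ ⟨⟨x', hx'⟩, h⟩ heq
    simp only at heq
    set w := σ g x with hw
    have hw' : σ h x' = w := heq.symm
    -- witness for (x,g)
    have wit : ∀ (u : Ω) (k : G), u ∈ (insert z {y : Ω | S 1 z y = 1} : Set Ω) →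
        σ k u = w → ∃ i : G ⊕ G,
          Sum.elim (fun g => T g z w) (fun g => S g z w) i = 1 ∧
          ((i = Sum.inl k ∧ u = z) ∨ (i = Sum.inr k ∧ u = σ k⁻¹ w)) := by
      intro u k hu hku
      rcases Set.mem_insert_iff.mp hu with hu | hu
      · subst hu
        refine ⟨Sum.inl k, ?_, Or.inl ⟨rfl, rfl⟩⟩
        rw [Sum.elim_inl, hσ, if_pos hku]
      · refine ⟨Sum.inr k, ?_, Or.inr ⟨rfl, ?_⟩⟩
        · rw [Sum.elim_inr, hSshift, ← hku, hσinv]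
          exact hu
        · rw [← hku, hσinv]
    obtain ⟨i, hi1, hi2⟩ := wit x g hx rfl
    obtain ⟨j, hj1, hj2⟩ := wit x' h hx' hw'
    obtain ⟨a, -, huniq⟩ := hkey w
    have hij : i = j := (huniq i hi1).trans (huniq j hj1).symm
    rcases hi2 with ⟨hi, hxz⟩ | ⟨hi, hxv⟩ <;> rcases hj2 with ⟨hj, hxz'⟩ | ⟨hj, hxv'⟩ <;>
      rw [hi, hj] at hij
    · have hgk : g = h := by simpa using hij
      subst hgk
      exact Prod.ext (Subtype.ext (hxz.trans hxz'.symm)) rfl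
    · exact absurd hij (by simp)
    · exact absurd hij (by simp)
    · have hgk : g = h := by simpa using hij
      subst hgk
      exact Prod.ext (Subtype.ext (hxv.trans hxv'.symm)) rfl
  · -- surjective
    intro w
    obtain ⟨i, hi, -⟩ := hkey w
    cases i with
    | inl g =>
      rw [Sum.elim_inl, hσ] at hi
      have hgz : σ g z = w := by by_contra hne; rw [if_neg hne] at hi; exact zero_ne_one hi
      exact ⟨⟨⟨z, Set.mem_insert z _⟩, g⟩, hgz⟩
    | inr g =>
      rw [Sum.elim_inr, hSshift] at hi
      refine ⟨⟨⟨σ g⁻¹ w, Set.mem_insert_of_mem z hi⟩, g⟩, ?_⟩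
      exact hσinv' g w

end
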